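/- (Upper bound of Proposition 1.) Let c = (c₁,…,c_N) ∈ ℝ^N with cᵢ > 0 and ‖c‖ = 1, and let u, v ∈ ℝ^N. Set Δ = ‖u − v‖ and δ = ‖Φ_c(u) − Φ_c(v)‖. If 0 < Δ ≤ π, then δ ≤ (sin(Δ/2)/(Δ/2))·Δ = 2 sin(Δ/2) ≤ Δ. -/

import Mathlib

open Real
open scoped RealInnerProductSpace

noncomputable def PhiTorus {N : ℕ} (c u : EuclideanSpace ℝ (Fin N)) :
    EuclideanSpace ℝ (Fin N × Fin 2) :=
  (WithLp.equiv 2 _).symm fun p =>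
    if p.2 = 0 then c p.1 * Real.cos (u p.1 / c p.1)
    else c p.1 * Real.sin (u p.1 / c p.1)

-- sinc is antitone on (0, π)
lemma sinc_antitone : AntitoneOn (fun t => Real.sin t / t) (Set.Ioo 0 π) := by
  apply antitoneOn_of_deriv_nonpos (convex_Ioo 0 π)
  · exact ContinuousOn.div Real.continuous_sin.continuousOn continuousOn_id
      (fun t ht => ne_of_gt ht.1)
  · rw [interior_Ioo]
    intro t ht
    exact (((Real.hasDerivAt_sin t).div (hasDerivAt_id t) (ne_of_gt ht.1)).differentiableAt).differentiableWithinAt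
  · rw [interior_Ioo]
    intro t ht
    have hd := (Real.hasDerivAt_sin t).div (hasDerivAt_id t) (ne_of_gt ht.1)
    simp only [id_eq] at hd
    rw [show (fun t => Real.sin t / t) = (Real.sin / id) from rfl, hd.deriv]
    have hnum : Real.cos t * t - Real.sin t * 1 ≤ 0 := by
      rcases lt_or_ge t (π / 2) with h | h
      · have := Real.lt_tan ht.1 h
        have hcos : 0 < Real.cos t := Real.cos_pos_of_mem_Ioo ⟨by have := ht.1; linarith [Real.pi_pos], h⟩
        rw [Real.tan_eq_sin_div_cos] at this
        have := (lt_div_iff₀ hcos).mp this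
        nlinarith
      · have hcos : Real.cos t ≤ 0 := Real.cos_nonpos_of_pi_div_two_le_of_le h (by linarith [ht.2, Real.pi_pos])
        have hsin : 0 ≤ Real.sin t := Real.sin_nonneg_of_nonneg_of_le_pi (le_of_lt ht.1) (le_of_lt ht.2)
        nlinarith [ht.1]
    have ht2 : (0:ℝ) < t ^ 2 := pow_pos ht.1 2
    exact div_nonpos_of_nonpos_of_nonneg hnum (le_of_lt ht2)

lemma g_hasDeriv {s : ℝ} (hs : 0 < s) :
    HasDerivAt (fun s => Real.sin (Real.sqrt s) ^ 2)
      (Real.sin (2 * Real.sqrt s) / (2 * Real.sqrt s)) s := by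
  have hsq := Real.hasDerivAt_sqrt (ne_of_gt hs)
  have hsin := (Real.hasDerivAt_sin (Real.sqrt s)).comp s hsq
  have h := hsin.pow 2
  refine h.congr_deriv ?_
  have hss : Real.sqrt s ≠ 0 := by positivity
  rw [Real.sin_two_mul]
  field_simp
  simp only [Function.comp_apply]
  push_cast
  ring

lemma g_concave : ConcaveOn ℝ (Set.Icc 0 ((π/2)^2)) (fun s => Real.sin (Real.sqrt s) ^ 2) := by
  have hπ := Real.pi_pos
  apply AntitoneOn.concaveOn_of_deriv (convex_Icc _ _)
  · exact ((Real.continuous_sin.comp Real.continuous_sqrt).pow 2).continuousOn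
  · rw [interior_Icc]
    intro s hs
    exact (g_hasDeriv hs.1).differentiableAt.differentiableWithinAt
  · rw [interior_Icc]
    intro s hs t ht hst
    rw [(g_hasDeriv hs.1).deriv, (g_hasDeriv ht.1).deriv]
    have h1 : 2 * Real.sqrt s ∈ Set.Ioo 0 π := by
      constructor
      · have hsp := Real.sqrt_pos.mpr hs.1; linarith
      · have : Real.sqrt s < Real.sqrt ((π/2)^2) := Real.sqrt_lt_sqrt (le_of_lt hs.1) hs.2
        rw [Real.sqrt_sq (by positivity)] at this
        linarith
    have h2 : 2 * Real.sqrt t ∈ Set.Ioo 0 π := by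
      constructor
      · have htp := Real.sqrt_pos.mpr ht.1; linarith
      · have : Real.sqrt t < Real.sqrt ((π/2)^2) := Real.sqrt_lt_sqrt (le_of_lt ht.1) ht.2
        rw [Real.sqrt_sq (by positivity)] at this
        linarith
    exact sinc_antitone h1 h2 (by gcongr)

lemma sin_sqrt_sq (x : ℝ) : Real.sin (Real.sqrt (x ^ 2)) ^ 2 = Real.sin x ^ 2 := by
  rw [Real.sqrt_sq_eq_abs]
  rcases abs_cases x with ⟨h, _⟩ | ⟨h, _⟩
  · rw [h]
  · rw [h, Real.sin_neg]; ring

lemma trig_key (x a b : ℝ) :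
    (x * Real.cos a - x * Real.cos b) ^ 2 + (x * Real.sin a - x * Real.sin b) ^ 2
      = 4 * x ^ 2 * Real.sin ((a - b) / 2) ^ 2 := by
  have h1 := Real.sin_sq_add_cos_sq a
  have h2 := Real.sin_sq_add_cos_sq b
  have h3 := Real.sin_sq_add_cos_sq ((a - b) / 2)
  have h4 := Real.cos_sub a b
  have h5 : Real.cos (a - b) = Real.cos ((a-b)/2) ^ 2 - Real.sin ((a-b)/2) ^ 2 := by
    rw [show a - b = (a-b)/2 + (a-b)/2 by ring, Real.cos_add]; ring
  nlinarith [sq_nonneg x]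

theorem stmt_3 (N : ℕ) (c : EuclideanSpace ℝ (Fin N)) (hc : ∀ i, 0 < c i)
    (hnorm : ‖c‖ = 1) (u v : EuclideanSpace ℝ (Fin N)) (Δ δ : ℝ)
    (hΔ : Δ = ‖u - v‖) (hδ : δ = ‖PhiTorus c u - PhiTorus c v‖)
    (h0 : 0 < Δ) (hπ : Δ ≤ π) :
    δ ≤ 2 * Real.sin (Δ / 2) ∧
      Real.sin (Δ / 2) / (Δ / 2) * Δ = 2 * Real.sin (Δ / 2) ∧
      2 * Real.sin (Δ / 2) ≤ Δ := by
  have hπ0 := Real.pi_pos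
  have hΔne : Δ ≠ 0 := ne_of_gt h0
  refine ⟨?_, by field_simp, ?_⟩
  swap
  · have := Real.sin_le (show (0:ℝ) ≤ Δ / 2 by linarith)
    linarith
  -- main inequality
  have hc0 : ∀ i, c i ≠ 0 := fun i => ne_of_gt (hc i)
  set w : Fin N → ℝ := fun i => u i - v i with hw
  -- Δ² = Σ wᵢ²
  have hΔ2 : Δ ^ 2 = ∑ i, w i ^ 2 := by
    rw [hΔ, EuclideanSpace.norm_eq, Real.sq_sqrt (by positivity)]
    congr 1; ext i
    simp [hw, Real.norm_eq_abs, sq_abs]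
  -- δ² = Σ 4cᵢ² sin²(wᵢ/(2cᵢ))
  have hδ2 : δ ^ 2 = ∑ i, 4 * (c i) ^ 2 * Real.sin (w i / (2 * c i)) ^ 2 := by
    rw [hδ, EuclideanSpace.norm_eq, Real.sq_sqrt (by positivity)]
    rw [Fintype.sum_prod_type]
    congr 1; ext i
    rw [Fin.sum_univ_two]
    have happ : ∀ (j : Fin 2), (PhiTorus c u - PhiTorus c v) (i, j)
        = (if j = 0 then c i * Real.cos (u i / c i) else c i * Real.sin (u i / c i))
          - (if j = 0 then c i * Real.cos (v i / c i) else c i * Real.sin (v i / c i)) := by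
      intro j
      simp [PhiTorus]
    rw [happ 0, happ 1]
    simp only [Real.norm_eq_abs, sq_abs]
    norm_num
    rw [trig_key]
    have : (u i / c i - v i / c i) / 2 = w i / (2 * c i) := by
      field_simp [hw]; ring
    rw [this]
  -- weights and points for Jensen
  set a : Fin N → ℝ := fun i => (c i) ^ 2 with ha
  set y : Fin N → ℝ := fun i => min ((w i / (2 * c i)) ^ 2) ((π / 2) ^ 2) with hy
  have hsum_a : ∑ i, a i = 1 := by
    have : ‖c‖ ^ 2 = ∑ i, (c i) ^ 2 := by
      rw [EuclideanSpace.norm_eq, Real.sq_sqrt (by positivity)]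
      congr 1; ext i; simp [Real.norm_eq_abs, sq_abs]
    rw [hnorm] at this; simpa [ha] using this.symm
  have hy_mem : ∀ i, y i ∈ Set.Icc (0:ℝ) ((π/2)^2) := fun i =>
    ⟨le_min (sq_nonneg _) (by positivity), min_le_right _ _⟩
  -- pointwise bound
  have hpt : ∀ i, Real.sin (w i / (2 * c i)) ^ 2 ≤ Real.sin (Real.sqrt (y i)) ^ 2 := by
    intro i
    rcases le_or_gt ((w i / (2 * c i)) ^ 2) ((π / 2) ^ 2) with h | h
    · have hyi : y i = (w i / (2 * c i)) ^ 2 := min_eq_left h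
      rw [hyi, sin_sqrt_sq]
    · have hyi : y i = (π / 2) ^ 2 := min_eq_right (le_of_lt h)
      rw [hyi, Real.sqrt_sq (by positivity), Real.sin_pi_div_two]
      nlinarith [Real.neg_one_le_sin (w i / (2 * c i)), Real.sin_le_one (w i / (2 * c i))]
  -- Jensen
  have hjensen : ∑ i, a i • Real.sin (Real.sqrt (y i)) ^ 2
      ≤ Real.sin (Real.sqrt (∑ i, a i • y i)) ^ 2 :=
    g_concave.le_map_sum (fun i _ => sq_nonneg (c i)) hsum_a (fun i _ => hy_mem i)
  -- Σ aᵢ yᵢ ≤ Δ²/4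
  set S : ℝ := ∑ i, a i • y i with hS
  have hS_nonneg : 0 ≤ S := Finset.sum_nonneg fun i _ =>
    smul_nonneg (sq_nonneg _) (hy_mem i).1
  have hS_le : S ≤ Δ ^ 2 / 4 := by
    rw [hS, hΔ2, Finset.sum_div]
    apply Finset.sum_le_sum
    intro i _
    have : a i • y i ≤ a i * ((w i / (2 * c i)) ^ 2) := by
      simp only [smul_eq_mul]
      exact mul_le_mul_of_nonneg_left (min_le_left _ _) (sq_nonneg _)
    calc a i • y i ≤ a i * ((w i / (2 * c i)) ^ 2) := this
      _ = w i ^ 2 / 4 := by rw [ha]; field_simp [hc0 i]; ring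
  -- monotonicity of g
  have hmono : Real.sin (Real.sqrt S) ^ 2 ≤ Real.sin (Δ / 2) ^ 2 := by
    have h1 : Real.sqrt S ≤ Δ / 2 := by
      rw [show Δ / 2 = Real.sqrt ((Δ/2)^2) by rw [Real.sqrt_sq (by linarith)]]
      apply Real.sqrt_le_sqrt; nlinarith
    have h2 : Real.sqrt S ≤ π / 2 := by linarith
    have h3 : 0 ≤ Real.sqrt S := Real.sqrt_nonneg _
    have h4 : Real.sin (Real.sqrt S) ≤ Real.sin (Δ / 2) := by
      apply Real.strictMonoOn_sin.monotoneOn ⟨by linarith, h2⟩ ⟨by linarith, by linarith⟩ h1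
    have h5 : 0 ≤ Real.sin (Real.sqrt S) :=
      Real.sin_nonneg_of_nonneg_of_le_pi h3 (by linarith)
    nlinarith
  -- combine
  have hsin_nonneg : 0 ≤ Real.sin (Δ / 2) :=
    Real.sin_nonneg_of_nonneg_of_le_pi (by linarith) (by linarith)
  have hδ_nonneg : 0 ≤ δ := hδ ▸ norm_nonneg _
  have hfinal : δ ^ 2 ≤ 4 * Real.sin (Δ / 2) ^ 2 := by
    rw [hδ2]
    calc ∑ i, 4 * (c i) ^ 2 * Real.sin (w i / (2 * c i)) ^ 2
        ≤ ∑ i, 4 * (a i • Real.sin (Real.sqrt (y i)) ^ 2) := by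
          apply Finset.sum_le_sum
          intro i _
          simp only [ha, smul_eq_mul]
          nlinarith [hpt i, sq_nonneg (c i)]
      _ = 4 * ∑ i, a i • Real.sin (Real.sqrt (y i)) ^ 2 := by rw [Finset.mul_sum]
      _ ≤ 4 * Real.sin (Real.sqrt S) ^ 2 := by linarith [hjensen]
      _ ≤ 4 * Real.sin (Δ / 2) ^ 2 := by linarith [hmono]
  nlinarith
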